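/- Every M-convex set (the set of integer points of an integral base polyhedron) has a dec-min element, i.e., an element x with x ≤_dec y for all y in the set. -/

import Mathlib

open Finset

/-- Descending rearrangement of a tuple. -/
noncomputable def sortDesc {n : ℕ} {α : Type*} [LinearOrder α] (x : Fin n → α) : Fin n → α :=
  x ∘ (Tuple.sort (fun i => OrderDual.toDual (x i)))

/-- `x <_dec y` : strict lexicographic comparison of descending rearrangements. -/
noncomputable def decLT {n : ℕ} {α : Type*} [LinearOrder α] (x y : Fin n → α) : Prop :=
  ∃ i : Fin n, (∀ j : Fin n, j < i → sortDesc x j = sortDesc y j) ∧ sortDesc x i < sortDesc y i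

/-- `x ≤_dec y` : lexicographic comparison of descending rearrangements. -/
noncomputable def decLE {n : ℕ} {α : Type*} [LinearOrder α] (x y : Fin n → α) : Prop :=
  sortDesc x = sortDesc y ∨ decLT x y

/-- `x` is a decreasingly minimal (dec-min) element of `S`. -/
noncomputable def DecMin {n : ℕ} (S : Set (Fin n → ℤ)) (x : Fin n → ℤ) : Prop :=
  x ∈ S ∧ ∀ y ∈ S, decLE x y

/-- Embedding of integer vectors into real vectors. -/
def castVec {n : ℕ} (z : Fin n → ℤ) : Fin n → ℝ := fun i => (z i : ℝ)

/-- `S ⊆ ℤⁿ` is an integrally convex set: every point of `conv S` lies in the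
convex hull of the points of `S` in its integral neighborhood. -/
def IntConvexSet {n : ℕ} (S : Set (Fin n → ℤ)) : Prop :=
  S.Nonempty ∧ ∀ x : Fin n → ℝ,
    x ∈ convexHull ℝ (castVec '' S) →
    x ∈ convexHull ℝ (castVec '' {z ∈ S | ∀ i, |x i - (z i : ℝ)| < 1})

/-- M-convex set: nonempty subset of ℤⁿ satisfying the exchange axiom. -/
def MConvexSet {n : ℕ} (S : Set (Fin n → ℤ)) : Prop :=
  S.Nonempty ∧ ∀ x ∈ S, ∀ y ∈ S, ∀ i : Fin n, y i < x i →
    ∃ j : Fin n, x j < y j ∧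
      (x - Pi.single i 1 + Pi.single j 1) ∈ S ∧
      (y + Pi.single i 1 - Pi.single j 1) ∈ S

noncomputable instance lexIntLinearOrder (n : ℕ) : LinearOrder (Lex (Fin n → ℤ)) :=
  @Pi.Lex.linearOrder (Fin n) (fun _ => ℤ)
    (inferInstanceAs (LinearOrder (Fin n))) (inferInstanceAs (WellFoundedLT (Fin n)))
    (fun _ => inferInstanceAs (LinearOrder ℤ))

lemma sortDesc_antitone {n : ℕ} (x : Fin n → ℤ) : Antitone (sortDesc x) := by
  intro a b hab
  exact Tuple.monotone_sort (fun i => OrderDual.toDual (x i)) hab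

lemma sum_sortDesc {n : ℕ} (x : Fin n → ℤ) : ∑ i, sortDesc x i = ∑ i, x i :=
  Equiv.sum_comp (Tuple.sort (fun i => OrderDual.toDual (x i))) x

lemma apply_eq_sortDesc {n : ℕ} (x : Fin n → ℤ) (i : Fin n) :
    x i = sortDesc x ((Tuple.sort (fun i => OrderDual.toDual (x i))).symm i) := by
  simp [sortDesc]

/-- Exchange step decreasing the ℓ¹-distance while preserving the sum. -/
lemma mconvex_step {n : ℕ} {S : Set (Fin n → ℤ)} (hS : MConvexSet S)
    {x y : Fin n → ℤ} (hx : x ∈ S) (hy : y ∈ S) {i : Fin n} (h : y i < x i) :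
    ∃ x' ∈ S, (∑ k, x' k = ∑ k, x k) ∧
      ∑ k, (x' k - y k).natAbs < ∑ k, (x k - y k).natAbs := by
  obtain ⟨j, hj, hx', -⟩ := hS.2 x hx y hy i h
  have hij : i ≠ j := by rintro rfl; omega
  refine ⟨_, hx', ?_, ?_⟩
  · simp [Finset.sum_add_distrib, Finset.sum_sub_distrib, Finset.sum_pi_single]
  · have hvals : ∀ k : Fin n, ((x - Pi.single i 1 + Pi.single j 1 : Fin n → ℤ)) k =
        x k - (if k = i then 1 else 0) + (if k = j then 1 else 0) := by
      intro k; simp [Pi.single_apply]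
    apply Finset.sum_lt_sum
    · intro k _
      rw [hvals k]
      rcases eq_or_ne k i with rfl | hki
      · rw [if_pos rfl, if_neg hij]; omega
      · rcases eq_or_ne k j with rfl | hkj
        · rw [if_neg hki, if_pos rfl]; omega
        · rw [if_neg hki, if_neg hkj]; omega
    · refine ⟨i, Finset.mem_univ i, ?_⟩
      rw [hvals i, if_pos rfl, if_neg hij]
      omega

/-- All elements of an M-convex set have the same component sum. -/
lemma mconvex_sum_eq {n : ℕ} {S : Set (Fin n → ℤ)} (hS : MConvexSet S) :
    ∀ x ∈ S, ∀ y ∈ S, ∑ i, x i = ∑ i, y i := by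
  suffices H : ∀ d : ℕ, ∀ x ∈ S, ∀ y ∈ S, (∑ i, (x i - y i).natAbs) = d →
      ∑ i, x i = ∑ i, y i by
    intro x hx y hy; exact H _ x hx y hy rfl
  intro d
  induction d using Nat.strong_induction_on with
  | _ d ih =>
    intro x hx y hy hd
    by_cases hxy : x = y
    · rw [hxy]
    · obtain ⟨i, hi⟩ := Function.ne_iff.mp hxy
      rcases lt_or_gt_of_ne hi with h | h
      · -- x i < y i : exchange from y
        obtain ⟨y', hy', hsum, hlt⟩ := mconvex_step hS hy hx h
        have hsym : ∀ z w : Fin n → ℤ, ∑ k, (z k - w k).natAbs = ∑ k, (w k - z k).natAbs := by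
          intro z w; apply Finset.sum_congr rfl; intro k _; omega
        have hlt' : ∑ k, (x k - y' k).natAbs < d := by
          rw [hsym, ← hd, hsym x y]; exact hlt
        have := ih _ hlt' x hx y' hy' rfl
        omega
      · obtain ⟨x', hx', hsum, hlt⟩ := mconvex_step hS hx hy h
        have hlt' : ∑ k, (x' k - y k).natAbs < d := hd ▸ hlt
        have := ih _ hlt' x' hx' y hy rfl
        omega

theorem mconvex_has_decmin (n : ℕ) (S : Set (Fin n → ℤ)) (hS : MConvexSet S) :
    ∃ x, DecMin S x := by
  obtain ⟨x0, hx0⟩ := hS.1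
  rcases Nat.eq_zero_or_pos n with rfl | hn
  · exact ⟨x0, hx0, fun y hy => Or.inl (funext fun i => i.elim0)⟩
  set s : ℤ := ∑ i, x0 i with hs
  have hsum : ∀ x ∈ S, ∑ i, x i = s := fun x hx => mconvex_sum_eq hS x hx x0 hx0
  set i0 : Fin n := ⟨0, hn⟩ with hi0
  have hi0le : ∀ k : Fin n, i0 ≤ k := fun k => Fin.mk_le_of_le_val (Nat.zero_le _)
  -- each coordinate of sortDesc is at most the head
  have hhead : ∀ x : Fin n → ℤ, ∀ i : Fin n, x i ≤ sortDesc x i0 := by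
    intro x i
    rw [apply_eq_sortDesc x i]
    exact sortDesc_antitone x (hi0le _)
  -- heads are bounded below
  have hbdd : ∀ x ∈ S, -|s| ≤ sortDesc x i0 := by
    intro x hx
    have h1 : s ≤ (n : ℤ) * sortDesc x i0 := by
      have : s = ∑ i, sortDesc x i := by rw [sum_sortDesc, hsum x hx]
      rw [this]
      calc ∑ i, sortDesc x i ≤ ∑ _i : Fin n, sortDesc x i0 :=
            Finset.sum_le_sum (fun i _ => sortDesc_antitone x (hi0le i))
        _ = (n : ℤ) * sortDesc x i0 := by
            simp [Finset.sum_const, mul_comm]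
    rcases le_or_gt 0 (sortDesc x i0) with h2 | h2
    · have := neg_abs_le s; have := abs_nonneg s; omega
    · have h3 : (n : ℤ) * sortDesc x i0 ≤ 1 * sortDesc x i0 := by
        apply mul_le_mul_of_nonpos_right _ h2.le
        exact_mod_cast hn
      have := neg_abs_le s
      omega
  obtain ⟨m, ⟨xm, hxm, hxmhead⟩, hmle⟩ :=
    Int.exists_least_of_bdd (P := fun m => ∃ x ∈ S, sortDesc x i0 = m)
      ⟨-|s|, fun z ⟨x, hx, hxz⟩ => hxz ▸ hbdd x hx⟩ ⟨_, x0, hx0, rfl⟩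
  set S' : Set (Fin n → ℤ) := {x ∈ S | sortDesc x i0 = m} with hS'
  have hS'ne : S'.Nonempty := ⟨xm, hxm, hxmhead⟩
  -- S' is contained in a finite box
  set lo : ℤ := s - ((n - 1 : ℕ) : ℤ) * m with hlo
  have hbox : S' ⊆ Set.pi Set.univ (fun _ : Fin n => Set.Icc lo m) := by
    rintro x ⟨hx, hxm0⟩
    rw [Set.mem_univ_pi]
    intro i
    have hub : ∀ j, x j ≤ m := fun j => hxm0 ▸ hhead x j
    constructor
    · have h1 : x i + ∑ j ∈ Finset.univ.erase i, x j = s := by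
        rw [Finset.add_sum_erase _ x (Finset.mem_univ i)]
        exact hsum x hx
      have h2 : ∑ j ∈ Finset.univ.erase i, x j ≤ (Finset.univ.erase i).card • m :=
        Finset.sum_le_card_nsmul _ _ _ (fun j _ => hub j)
      rw [Finset.card_erase_of_mem (Finset.mem_univ i), Finset.card_univ,
        Fintype.card_fin, nsmul_eq_mul] at h2
      omega
    · exact hub i
  have hS'fin : S'.Finite :=
    Set.Finite.subset (Set.Finite.pi (fun _ => Set.finite_Icc lo m)) hbox
  obtain ⟨a, haS', hamin⟩ :=
    Set.exists_min_image (β := Lex (Fin n → ℤ)) S' (fun x => toLex (sortDesc x)) hS'fin hS'ne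
  refine ⟨a, haS'.1, fun y hy => ?_⟩
  have hym : m ≤ sortDesc y i0 := hmle _ ⟨y, hy, rfl⟩
  rcases eq_or_lt_of_le hym with heq | hlt
  · -- y ∈ S'
    have hyS' : y ∈ S' := ⟨hy, heq.symm⟩
    have hle := hamin y hyS'
    rcases eq_or_lt_of_le hle with heq2 | hlt2
    · exact Or.inl (toLex.injective heq2)
    · have hlex : Pi.Lex (· < ·) (@fun _ => ((· < ·) : ℤ → ℤ → Prop)) (sortDesc a) (sortDesc y) := hlt2
      obtain ⟨i, h1, h2⟩ := hlex
      exact Or.inr ⟨i, h1, h2⟩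
  · refine Or.inr ⟨i0, fun j hj => absurd hj ?_, ?_⟩
    · simp [Fin.lt_def, hi0]
    · rw [haS'.2]; exact hlt
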